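/- Theorem 2, item (i) (hysteresis supervisor, uniform output bound). Consider supervisor data (M, (Δ_q), (β_q), (χ_q)) and a hysteresis-supervised output trajectory (y, v, (t_j), (q_j)) with disturbance bound v. Define β̄(s) := max_{0 ≤ q ≤ M} β_q(s, 0). Then for every t ≥ 0: y(t) ≤ β̄(max{Δ_M, y(0)}) + v(t). -/

import Mathlib

open Set Filter

/-- A class-`K` function: continuous, strictly increasing on `[0,∞)`, vanishing at `0`. -/
def ClassK (γ : ℝ → ℝ) : Prop :=
  ContinuousOn γ (Ici 0) ∧ StrictMonoOn γ (Ici 0) ∧ γ 0 = 0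

/-- A class-`KL` function: class `K` in the first argument for every fixed second argument
`t ≥ 0`, and (for every fixed `s > 0`) continuous, strictly decreasing and tending to `0`
at `+∞` in the second argument. -/
def ClassKL (β : ℝ → ℝ → ℝ) : Prop :=
  (∀ t ≥ (0:ℝ), ClassK (fun s => β s t)) ∧
  ∀ s > (0:ℝ), ContinuousOn (β s) (Ici 0) ∧ StrictAntiOn (β s) (Ici 0) ∧
    Tendsto (β s) atTop (nhds 0)

/-- Supervisor data: number of thresholds `M ≥ 1`, thresholds
`0 = Δ 0 < Δ 1 < ⋯ < Δ M`, class-`KL` bounds `β q` with `β q s 0 > s` for `s > 0` and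
`β q (Δ (q+1)) 0 ≤ Δ (q+2)` whenever `q+2 ≤ M`, and inverses `χ q` of `s ↦ β q s 0`. -/
structure SupervisorData where
  M : ℕ
  Δ : ℕ → ℝ
  β : ℕ → ℝ → ℝ → ℝ
  χ : ℕ → ℝ → ℝ
  hM : 1 ≤ M
  hΔ0 : Δ 0 = 0
  hΔlt : ∀ q < M, Δ q < Δ (q + 1)
  hβKL : ∀ q ≤ M, ClassKL (β q)
  hβgt : ∀ q ≤ M, ∀ s > (0:ℝ), s < β q s 0
  hβΔ : ∀ q, q + 2 ≤ M → β q (Δ (q + 1)) 0 ≤ Δ (q + 2)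
  hχ : ∀ q ≤ M, ∀ s ≥ (0:ℝ), 0 ≤ χ q s ∧ β q (χ q s) 0 = s

/-- A hysteresis-supervised output trajectory with disturbance bound `v`:
a continuous nonnegative output `y` on `[0,∞)`, a nondecreasing nonnegative disturbance
bound `v`, switching times `t 0 = 0 < t 1 < ⋯` (finite with last index `N` when `N ≠ ⊤`,
in which case `t` is only constrained up to `N` and the last interval is `[t N, ∞)`;
infinite with `t j → ∞` when `N = ⊤`), and modes `q j ≤ M` switching only to adjacent modes (`q (j+1) = q j ± 1`),
satisfying the initial, switching and inter-switch SIIOS output conditions. -/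
structure HysTraj (D : SupervisorData) where
  y : ℝ → ℝ
  v : ℝ → ℝ
  t : ℕ → ℝ
  q : ℕ → ℕ
  N : ℕ∞
  hy_cont : ContinuousOn y (Ici 0)
  hy_nonneg : ∀ s ≥ (0:ℝ), 0 ≤ y s
  hv_mono : MonotoneOn v (Ici 0)
  hv_nonneg : ∀ s ≥ (0:ℝ), 0 ≤ v s
  ht0 : t 0 = 0
  ht_lt : ∀ j : ℕ, ((j + 1 : ℕ) : ℕ∞) ≤ N → t j < t (j + 1)
  ht_top : N = ⊤ → Tendsto t atTop atTop
  hq_le : ∀ j : ℕ, (j : ℕ∞) ≤ N → q j ≤ D.M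
  hq_adj : ∀ j : ℕ, ((j + 1 : ℕ) : ℕ∞) ≤ N → q (j + 1) = q j + 1 ∨ q (j + 1) + 1 = q j
  h_init_lo : D.Δ (q 0) ≤ y 0
  h_init_hi : q 0 < D.M → y 0 < D.Δ (q 0 + 1)
  h_switch_lt : ∀ j : ℕ, 1 ≤ j → (j : ℕ∞) ≤ N → q j < D.M →
    D.Δ (q j) ≤ y (t j) ∧ y (t j) ≤ D.χ (q j) (D.Δ (q j + 1))
  h_switch_top : ∀ j : ℕ, 1 ≤ j → (j : ℕ∞) ≤ N → q j = D.M →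
    y (t j) = D.Δ D.M
  h_bound : ∀ j : ℕ, (j : ℕ∞) ≤ N → ∀ s : ℝ, t j ≤ s →
    (((j + 1 : ℕ) : ℕ∞) ≤ N → s ≤ t (j + 1)) →
    y s ≤ D.β (q j) (y (t j)) (s - t j) + v s

/-- **Theorem 2(i)** (hysteresis supervisor, uniform output bound):
for every `t ≥ 0`, `y t ≤ β̄ (max Δ_M (y 0)) + v t`, where
`β̄ s = max_{0 ≤ q ≤ M} β q s 0`. -/
theorem thm2_i (D : SupervisorData) (Tr : HysTraj D) :
    ∀ s ≥ (0:ℝ),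
      Tr.y s ≤
        (Finset.range (D.M + 1)).sup'
            (Finset.nonempty_range_iff.mpr (Nat.succ_ne_zero _))
            (fun q => D.β q (max (D.Δ D.M) (Tr.y 0)) 0)
          + Tr.v s := by

  classical
  -- Δ is monotone up to M
  have hΔmono : ∀ b ≤ D.M, ∀ a ≤ b, D.Δ a ≤ D.Δ b := by
    intro b
    induction b with
    | zero => intro _ a ha; interval_cases a; exact le_rfl
    | succ b ih =>
      intro hb a ha
      rcases eq_or_lt_of_le ha with rfl | h
      · exact le_rfl
      · have ha' : a ≤ b := Nat.lt_succ_iff.mp h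
        exact le_trans (ih (le_trans (Nat.le_succ b) hb) a ha')
          (le_of_lt (D.hΔlt b (by omega)))
  have hΔpos : ∀ p, 1 ≤ p → p ≤ D.M → 0 < D.Δ p := by
    intro p hp1 hpM
    have h01 : D.Δ 0 < D.Δ 1 := D.hΔlt 0 D.hM
    have h1p : D.Δ 1 ≤ D.Δ p := hΔmono p hpM 1 hp1
    rw [D.hΔ0] at h01
    linarith
  have hβ0 : ∀ p ≤ D.M, ∀ τ ≥ (0:ℝ), D.β p 0 τ = 0 :=
    fun p hp τ hτ => ((D.hβKL p hp).1 τ hτ).2.2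
  have hβtime : ∀ p ≤ D.M, ∀ u ≥ (0:ℝ), ∀ τ ≥ (0:ℝ), D.β p u τ ≤ D.β p u 0 := by
    intro p hp u hu τ hτ
    rcases eq_or_lt_of_le hu with rfl | hu'
    · rw [hβ0 p hp τ hτ, hβ0 p hp 0 le_rfl]
    · exact ((D.hβKL p hp).2 u hu').2.1.antitoneOn (self_mem_Ici) (mem_Ici.mpr hτ) hτ
  have hβmono : ∀ p ≤ D.M, ∀ u w : ℝ, 0 ≤ u → u ≤ w → D.β p u 0 ≤ D.β p w 0 := by
    intro p hp u w hu huw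
    exact ((D.hβKL p hp).1 0 le_rfl).2.1.monotoneOn (mem_Ici.mpr hu)
      (mem_Ici.mpr (le_trans hu huw)) huw
  have ht_nonneg : ∀ j : ℕ, ((j : ℕ∞) ≤ Tr.N) → 0 ≤ Tr.t j := by
    intro j
    induction j with
    | zero => intro _; rw [Tr.ht0]
    | succ j ih =>
      intro hj
      have hj' : ((j : ℕ∞) ≤ Tr.N) :=
        le_trans (by exact_mod_cast Nat.le_succ j) hj
      exact le_of_lt (lt_of_le_of_lt (ih hj') (Tr.ht_lt j hj))
  -- key claim: output at switching times is bounded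
  have hyt : ∀ j : ℕ, ((j : ℕ∞) ≤ Tr.N) → Tr.y (Tr.t j) ≤ max (D.Δ D.M) (Tr.y 0) := by
    intro j hj
    rcases Nat.eq_zero_or_pos j with rfl | hj1
    · rw [Tr.ht0]; exact le_max_right _ _
    · have hq := Tr.hq_le j hj
      rcases lt_or_eq_of_le hq with hlt | heq
      · have h1 := (Tr.h_switch_lt j hj1 hj hlt).2
        have hqM : Tr.q j + 1 ≤ D.M := Nat.succ_le_of_lt hlt
        have hΔp : 0 < D.Δ (Tr.q j + 1) := hΔpos _ (Nat.le_add_left 1 _) hqM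
        obtain ⟨hχ0, hχβ⟩ := D.hχ (Tr.q j) hq (D.Δ (Tr.q j + 1)) (le_of_lt hΔp)
        have hχlt : D.χ (Tr.q j) (D.Δ (Tr.q j + 1)) < D.Δ (Tr.q j + 1) := by
          rcases eq_or_lt_of_le hχ0 with h0 | h0
          · rw [← h0] at hχβ
            rw [hβ0 (Tr.q j) hq 0 le_rfl] at hχβ
            linarith
          · calc D.χ (Tr.q j) (D.Δ (Tr.q j + 1))
                < D.β (Tr.q j) (D.χ (Tr.q j) (D.Δ (Tr.q j + 1))) 0 :=
                  D.hβgt (Tr.q j) hq _ h0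
              _ = D.Δ (Tr.q j + 1) := hχβ
        have hΔM : D.Δ (Tr.q j + 1) ≤ D.Δ D.M := hΔmono D.M le_rfl _ hqM
        exact le_trans h1 (le_trans (le_of_lt hχlt) (le_trans hΔM (le_max_left _ _)))
      · rw [Tr.h_switch_top j hj1 hj heq]
        exact le_max_left _ _
  intro s hs
  -- find the interval containing s
  set P : ℕ → Prop := fun j => ((j : ℕ∞) ≤ Tr.N) ∧ Tr.t j ≤ s with hP
  have hP0 : P 0 := ⟨by simp, by rw [Tr.ht0]; exact hs⟩
  have hbdd : ∃ b, ∀ j, P j → j ≤ b := by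
    cases hN : Tr.N with
    | top =>
      obtain ⟨m, hm⟩ := Filter.eventually_atTop.mp ((Tr.ht_top hN).eventually_gt_atTop s)
      refine ⟨m, fun j hj => ?_⟩
      by_contra hc
      push_neg at hc
      exact absurd hj.2 (not_le.mpr (hm j (le_of_lt hc)))
    | coe n =>
      refine ⟨n, fun j hj => ?_⟩
      have := hj.1
      rw [hN] at this
      exact_mod_cast this
  obtain ⟨b, hb⟩ := hbdd
  have hex : ∃ j, P j ∧ ¬ P (j + 1) := by
    by_contra h
    push_neg at h
    have hstep : ∀ j, P j → P (j + 1) := fun j hj => h j hj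
    have hall : ∀ j, P j := fun j => Nat.rec hP0 hstep j
    have := hb (b + 1) (hall (b + 1))
    omega
  obtain ⟨j, hPj, hPj1⟩ := hex
  have hjN := hPj.1
  have htjs := hPj.2
  have hnext : (((j + 1 : ℕ) : ℕ∞) ≤ Tr.N) → s ≤ Tr.t (j + 1) := by
    intro h
    by_contra hc
    push_neg at hc
    exact hPj1 ⟨h, le_of_lt hc⟩
  have hboundj := Tr.h_bound j hjN s htjs hnext
  have hq := Tr.hq_le j hjN
  have htj0 : 0 ≤ Tr.t j := ht_nonneg j hjN
  have hy0 : 0 ≤ Tr.y (Tr.t j) := Tr.hy_nonneg _ htj0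
  have hmax0 : (0:ℝ) ≤ max (D.Δ D.M) (Tr.y 0) :=
    le_trans (Tr.hy_nonneg 0 le_rfl) (le_max_right _ _)
  calc Tr.y s ≤ D.β (Tr.q j) (Tr.y (Tr.t j)) (s - Tr.t j) + Tr.v s := hboundj
    _ ≤ D.β (Tr.q j) (Tr.y (Tr.t j)) 0 + Tr.v s :=
        add_le_add_left (hβtime (Tr.q j) hq _ hy0 _ (sub_nonneg.mpr htjs)) _
    _ ≤ D.β (Tr.q j) (max (D.Δ D.M) (Tr.y 0)) 0 + Tr.v s :=
        add_le_add_left (hβmono (Tr.q j) hq _ _ hy0 (hyt j hjN)) _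
    _ ≤ _ + Tr.v s :=
        add_le_add_left
          (Finset.le_sup' (fun p => D.β p (max (D.Δ D.M) (Tr.y 0)) 0)
            (Finset.mem_range.mpr (Nat.lt_succ_of_le hq))) _
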